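/- A real n×n matrix A is stable if and only if there exist real n×n matrices J, R, Q with Jᵀ = −J, R positive semidefinite, and Q positive definite such that A = (J − R)Q. -/

import Mathlib

open Matrix
open scoped DirectSum

/-- The complexification of a real matrix. -/
noncomputable def toC {n : ℕ} (A : Matrix (Fin n) (Fin n) ℝ) : Matrix (Fin n) (Fin n) ℂ :=
  A.map (fun a => (a : ℂ))

/-- A real matrix is stable if every complex eigenvalue has nonpositive real part and
every purely imaginary eigenvalue is semisimple (generalized eigenspace = eigenspace). -/
def IsStable {n : ℕ} (A : Matrix (Fin n) (Fin n) ℝ) : Prop :=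
  ∀ μ : ℂ, (∃ x : Fin n → ℂ, x ≠ 0 ∧ toC A *ᵥ x = μ • x) →
    μ.re ≤ 0 ∧ (μ.re = 0 →
      ∀ x : Fin n → ℂ, ((toC A - μ • 1) ^ n) *ᵥ x = 0 ↔ (toC A - μ • 1) *ᵥ x = 0)

namespace StableDH

variable {n : ℕ}

lemma toC_conjT (A : Matrix (Fin n) (Fin n) ℝ) : (toC A)ᴴ = toC Aᵀ := by
  ext i j
  simp [toC, conjTranspose_apply, Complex.conj_ofReal]

lemma toC_mul (A B : Matrix (Fin n) (Fin n) ℝ) : toC (A * B) = toC A * toC B := by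
  ext i j
  simp [toC, mul_apply]

lemma toC_sub (A B : Matrix (Fin n) (Fin n) ℝ) : toC (A - B) = toC A - toC B := by
  ext i j
  simp [toC]

/-- Real part of a complex-vector quadratic form of a real matrix. -/
lemma quad_re (B : Matrix (Fin n) (Fin n) ℝ) (x : Fin n → ℂ) :
    (star x ⬝ᵥ (toC B *ᵥ x)).re
      = (fun i => (x i).re) ⬝ᵥ (B *ᵥ fun i => (x i).re)
        + (fun i => (x i).im) ⬝ᵥ (B *ᵥ fun i => (x i).im) := by
  simp only [dotProduct, mulVec, Pi.star_apply, toC, map_apply, Finset.mul_sum,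
    Complex.re_sum, ← Finset.sum_add_distrib]
  refine Finset.sum_congr rfl fun i _ => ?_
  refine Finset.sum_congr rfl fun j _ => ?_
  simp [Complex.mul_re, Complex.mul_im, RCLike.star_def, Complex.conj_re, Complex.conj_im]

lemma mulVec_toC_re (B : Matrix (Fin n) (Fin n) ℝ) (x : Fin n → ℂ) (k : Fin n) :
    ((toC B *ᵥ x) k).re = (B *ᵥ fun i => (x i).re) k := by
  simp [toC, mulVec, dotProduct, Complex.re_sum, Complex.re_ofReal_mul]

lemma mulVec_toC_im (B : Matrix (Fin n) (Fin n) ℝ) (x : Fin n → ℂ) (k : Fin n) :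
    ((toC B *ᵥ x) k).im = (B *ᵥ fun i => (x i).im) k := by
  simp [toC, mulVec, dotProduct, Complex.im_sum, Complex.im_ofReal_mul]

lemma dot_move (M : Matrix (Fin n) (Fin n) ℂ) (u v : Fin n → ℂ) :
    star u ⬝ᵥ (M *ᵥ v) = star (Mᴴ *ᵥ u) ⬝ᵥ v := by
  rw [star_mulVec, conjTranspose_conjTranspose, dotProduct_mulVec]

lemma re_dot_comm (u v : Fin n → ℂ) : (star u ⬝ᵥ v).re = (star v ⬝ᵥ u).re := by
  rw [star_dotProduct]
  simp [Complex.star_def]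

lemma selfdot (w : Fin n → ℂ) :
    star w ⬝ᵥ w = ((∑ i, Complex.normSq (w i) : ℝ) : ℂ) := by
  simp only [dotProduct, Pi.star_apply, Complex.ofReal_sum]
  refine Finset.sum_congr rfl fun i _ => ?_
  rw [RCLike.star_def, mul_comm, Complex.mul_conj]

lemma selfdot_re_nonneg (w : Fin n → ℂ) : 0 ≤ (star w ⬝ᵥ w).re := by
  rw [selfdot, Complex.ofReal_re]
  exact Finset.sum_nonneg fun i _ => Complex.normSq_nonneg _

lemma selfdot_im (w : Fin n → ℂ) : (star w ⬝ᵥ w).im = 0 := by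
  rw [selfdot, Complex.ofReal_im]

lemma selfdot_re_pos {w : Fin n → ℂ} (hw : w ≠ 0) : 0 < (star w ⬝ᵥ w).re := by
  rcases Function.ne_iff.mp hw with ⟨k, hk⟩
  rw [selfdot, Complex.ofReal_re]
  refine Finset.sum_pos' (fun i _ => Complex.normSq_nonneg _) ⟨k, Finset.mem_univ _, ?_⟩
  simpa [Complex.normSq_pos] using hk


section Backward

variable {J R Q A : Matrix (Fin n) (Fin n) ℝ}

/-- skew quadratic form vanishes -/
lemma skew_quad (hJ : Jᵀ = -J) (u : Fin n → ℝ) : u ⬝ᵥ (J *ᵥ u) = 0 := by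
  have h : u ⬝ᵥ (Jᵀ *ᵥ u) = u ⬝ᵥ ((-J) *ᵥ u) := by rw [hJ]
  rw [mulVec_transpose, dotProduct_comm, ← dotProduct_mulVec, neg_mulVec, dotProduct_neg] at h
  linarith

lemma skew_quad_re (hJ : Jᵀ = -J) (x : Fin n → ℂ) :
    (star x ⬝ᵥ (toC J *ᵥ x)).re = 0 := by
  rw [quad_re, skew_quad hJ, skew_quad hJ, add_zero]

lemma psd_quad_re_nonneg (hR : R.PosSemidef) (x : Fin n → ℂ) :
    0 ≤ (star x ⬝ᵥ (toC R *ᵥ x)).re := by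
  rw [quad_re]
  have h1 := hR.dotProduct_mulVec_nonneg (fun i => (x i).re)
  have h2 := hR.dotProduct_mulVec_nonneg (fun i => (x i).im)
  simp only [star_trivial] at h1 h2
  linarith

lemma psd_quad_re_zero (hR : R.PosSemidef) {x : Fin n → ℂ}
    (h : (star x ⬝ᵥ (toC R *ᵥ x)).re = 0) : toC R *ᵥ x = 0 := by
  rw [quad_re] at h
  have h1 := hR.dotProduct_mulVec_nonneg (fun i => (x i).re)
  have h2 := hR.dotProduct_mulVec_nonneg (fun i => (x i).im)
  simp only [star_trivial] at h1 h2
  have e1 : R *ᵥ (fun i => (x i).re) = 0 := by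
    rw [← hR.dotProduct_mulVec_zero_iff]
    simp only [star_trivial]
    linarith
  have e2 : R *ᵥ (fun i => (x i).im) = 0 := by
    rw [← hR.dotProduct_mulVec_zero_iff]
    simp only [star_trivial]
    linarith
  funext k
  have := mulVec_toC_re R x k
  have := mulVec_toC_im R x k
  apply Complex.ext <;> simp_all

lemma pd_quad_re_pos (hQ : Q.PosDef) {x : Fin n → ℂ} (hx : x ≠ 0) :
    0 < (star x ⬝ᵥ (toC Q *ᵥ x)).re := by
  rw [quad_re]
  have hcases : (fun i => (x i).re) ≠ 0 ∨ (fun i => (x i).im) ≠ 0 := by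
    by_contra h
    push_neg at h
    apply hx
    funext i
    have h1 := congrFun h.1 i
    have h2 := congrFun h.2 i
    simp only [Pi.zero_apply] at h1 h2
    exact Complex.ext h1 h2
  have n1 := (hQ.posSemidef).dotProduct_mulVec_nonneg (fun i => (x i).re)
  have n2 := (hQ.posSemidef).dotProduct_mulVec_nonneg (fun i => (x i).im)
  simp only [star_trivial] at n1 n2
  rcases hcases with h | h
  · have := hQ.dotProduct_mulVec_pos h
    simp only [star_trivial] at this
    linarith
  · have := hQ.dotProduct_mulVec_pos h
    simp only [star_trivial] at this
    linarith

lemma pd_quad_zero (hQ : Q.PosDef) {x : Fin n → ℂ}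
    (h : (star x ⬝ᵥ (toC Q *ᵥ x)).re = 0) : x = 0 := by
  by_contra hx
  exact absurd h (ne_of_gt (pd_quad_re_pos hQ hx))

lemma herm_toC_symm (hQ : Qᵀ = Q) : (toC Q)ᴴ = toC Q := by
  rw [toC_conjT, hQ]

lemma herm_form_im {M : Matrix (Fin n) (Fin n) ℂ} (hM : Mᴴ = M) (x : Fin n → ℂ) :
    (star x ⬝ᵥ (M *ᵥ x)).im = 0 := by
  have hq : star x ⬝ᵥ (M *ᵥ x) = star (star x ⬝ᵥ (M *ᵥ x)) := by
    conv_lhs => rw [dot_move, hM, star_dotProduct]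
  have := congrArg Complex.im hq
  simp only [Complex.star_def, Complex.conj_im] at this
  linarith

/-- eigen-relation forces the Lyapunov identity -/
lemma eigen_re (hJ : Jᵀ = -J) (hR : R.PosSemidef) (hQ : Q.PosDef)
    (hA : A = (J - R) * Q) {y : Fin n → ℂ} {μ : ℂ} (hy : toC A *ᵥ y = μ • y) :
    μ.re * (star y ⬝ᵥ (toC Q *ᵥ y)).re
      = -(star (toC Q *ᵥ y) ⬝ᵥ (toC R *ᵥ (toC Q *ᵥ y))).re := by
  have hQh : (toC Q)ᴴ = toC Q := herm_toC_symm hQ.isHermitian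
  set w := toC Q *ᵥ y with hw
  -- star y ⬝ᵥ (Q *ᵥ (A *ᵥ y)) two ways
  have key : star y ⬝ᵥ (toC Q *ᵥ (toC A *ᵥ y))
      = star w ⬝ᵥ (toC J *ᵥ w) - star w ⬝ᵥ (toC R *ᵥ w) := by
    have : toC Q *ᵥ (toC A *ᵥ y) = toC Q *ᵥ ((toC J - toC R) *ᵥ w) := by
      rw [hA, toC_mul, toC_sub]
      simp only [hw, mulVec_mulVec, Matrix.mul_assoc]
    rw [this, dot_move, hQh, sub_mulVec, dotProduct_sub]
  have lhs : star y ⬝ᵥ (toC Q *ᵥ (toC A *ᵥ y)) = μ * (star y ⬝ᵥ (toC Q *ᵥ y)) := by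
    rw [hy, mulVec_smul, dotProduct_smul, smul_eq_mul]
  have him : (star y ⬝ᵥ (toC Q *ᵥ y)).im = 0 := herm_form_im hQh y
  have := congrArg Complex.re (lhs.symm.trans key)
  rw [Complex.mul_re, him, mul_zero, sub_zero, Complex.sub_re,
    skew_quad_re hJ, zero_sub] at this
  exact this


lemma backward (hJ : Jᵀ = -J) (hR : R.PosSemidef) (hQ : Q.PosDef)
    (hA : A = (J - R) * Q) : IsStable A := by
  have hQh : (toC Q)ᴴ = toC Q := herm_toC_symm hQ.isHermitian
  have hRsymm : Rᵀ = R := by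
    ext i j
    have := congrFun (congrFun hR.1 i) j
    simpa [conjTranspose_apply] using this
  have hQsymm : Qᵀ = Q := by
    ext i j
    have := congrFun (congrFun hQ.isHermitian.eq i) j
    simpa [conjTranspose_apply] using this
  intro μ hex
  obtain ⟨x, hx0, hx⟩ := hex
  have hq := eigen_re hJ hR hQ hA hx
  have hqpos := pd_quad_re_pos hQ hx0
  have hRnn := psd_quad_re_nonneg hR (toC Q *ᵥ x)
  refine ⟨by nlinarith, ?_⟩
  intro hre z
  have hconj : (starRingEnd ℂ) μ = -μ := by
    apply Complex.ext <;> simp [hre]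
  -- key: B (B v) = 0 → B v = 0
  have key : ∀ v : Fin n → ℂ, (toC A - μ • 1) *ᵥ ((toC A - μ • 1) *ᵥ v) = 0 →
      (toC A - μ • 1) *ᵥ v = 0 := by
    intro v hv
    set y := (toC A - μ • 1) *ᵥ v with hy
    have hyEig : toC A *ᵥ y = μ • y := by
      have h0 : (toC A - μ • 1) *ᵥ y = 0 := hv
      rwa [sub_mulVec, smul_mulVec, one_mulVec, sub_eq_zero] at h0
    have hq2 := eigen_re hJ hR hQ hA hyEig
    rw [hre, zero_mul] at hq2
    have hRw : toC R *ᵥ (toC Q *ᵥ y) = 0 := by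
      apply psd_quad_re_zero hR
      linarith
    have hJw : toC J *ᵥ (toC Q *ᵥ y) = μ • y := by
      have h1 : toC A *ᵥ y = (toC J - toC R) *ᵥ (toC Q *ᵥ y) := by
        rw [hA, toC_mul, toC_sub, ← mulVec_mulVec]
      rw [sub_mulVec, hRw, sub_zero] at h1
      rw [← h1, hyEig]
    have hAT : Aᵀ = Q * (-J - R) := by
      rw [hA, transpose_mul, transpose_sub, hJ, hRsymm, hQsymm]
    have hzero : star y ⬝ᵥ (toC Q *ᵥ y) = 0 := by
      have e0 : toC Q *ᵥ y = toC Q *ᵥ (toC A *ᵥ v) - μ • (toC Q *ᵥ v) := by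
        rw [hy, sub_mulVec, smul_mulVec, one_mulVec, mulVec_sub, mulVec_smul]
      have e1 : star y ⬝ᵥ (toC Q *ᵥ (toC A *ᵥ v))
          = μ * (star y ⬝ᵥ (toC Q *ᵥ v)) := by
        have h2 : toC Q *ᵥ (toC A *ᵥ v) = (toC Q * toC A) *ᵥ v := mulVec_mulVec _ _ _
        rw [h2, dot_move]
        have h3 : (toC Q * toC A)ᴴ *ᵥ y = -(μ • (toC Q *ᵥ y)) := by
          rw [conjTranspose_mul, hQh, toC_conjT, hAT, toC_mul]
          simp only [← mulVec_mulVec]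
          have h4 : toC (-J - R) *ᵥ (toC Q *ᵥ y) = -(μ • y) := by
            have : toC (-J - R) = -(toC J) - toC R := by ext i j; simp [toC]
            rw [this, sub_mulVec, neg_mulVec, hJw, hRw, sub_zero]
          rw [h4, mulVec_neg, mulVec_smul]
        rw [h3, star_neg, star_smul, neg_dotProduct, smul_dotProduct]
        have h5 : star (toC Q *ᵥ y) ⬝ᵥ v = star y ⬝ᵥ (toC Q *ᵥ v) := by
          rw [dot_move, hQh]
        rw [Complex.star_def, hconj, h5, smul_eq_mul]
        ring
      rw [e0, dotProduct_sub, dotProduct_smul, e1, smul_eq_mul, sub_self]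
    have hyz : y = 0 := pd_quad_zero hQ (by rw [hzero]; rfl)
    exact hyz
  rcases Nat.eq_zero_or_pos n with hn | hn
  · subst hn
    constructor <;> intro _ <;> (funext i; exact i.elim0)
  · obtain ⟨m, rfl⟩ : ∃ m, n = m + 1 := ⟨n - 1, by omega⟩
    constructor
    · have claim : ∀ k (v : Fin (m+1) → ℂ),
          ((toC A - μ • 1) ^ (k+1)) *ᵥ v = 0 → (toC A - μ • 1) *ᵥ v = 0 := by
        intro k
        induction k with
        | zero => intro v hv; rwa [pow_one] at hv
        | succ k ih =>
          intro v hv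
          rw [pow_succ, ← mulVec_mulVec] at hv
          exact key v (ih _ hv)
      exact claim m z
    · intro hz
      rw [pow_succ, ← mulVec_mulVec, hz, mulVec_zero]

end Backward


section Forward

variable (A : Matrix (Fin n) (Fin n) ℝ)

noncomputable def fEnd : Module.End ℂ (Fin n → ℂ) := Matrix.toLinAlgEquiv' (toC A)

lemma fEnd_apply (x : Fin n → ℂ) : fEnd A x = toC A *ᵥ x := Matrix.toLinAlgEquiv'_apply _ _

noncomputable def GG (μ : ℂ) : Submodule ℂ (Fin n → ℂ) := (fEnd A).maxGenEigenspace μ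

lemma internal : DirectSum.IsInternal (GG A) :=
  DirectSum.isInternal_submodule_of_iSupIndep_of_iSup_eq_top
    ((fEnd A).independent_maxGenEigenspace)
    (Module.End.iSup_maxGenEigenspace_eq_top (fEnd A))

noncomputable def eDec : (⨁ (μ : ℂ), GG A μ) ≃ₗ[ℂ] (Fin n → ℂ) :=
  LinearEquiv.ofBijective (DirectSum.coeLinearMap (GG A)) (internal A)

noncomputable def proj (μ : ℂ) : (Fin n → ℂ) →ₗ[ℂ] (Fin n → ℂ) :=
  (GG A μ).subtype ∘ₗ (DirectSum.component ℂ ℂ (fun ν => GG A ν) μ) ∘ₗ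
    (eDec A).symm.toLinearMap

lemma proj_apply (μ : ℂ) (x : Fin n → ℂ) :
    proj A μ x = ((((eDec A).symm x) μ : GG A μ) : Fin n → ℂ) := rfl

lemma proj_mem (μ : ℂ) (x : Fin n → ℂ) : proj A μ x ∈ GG A μ :=
  ((((eDec A).symm x) μ)).2

lemma proj_of_mem {μ : ℂ} {x : Fin n → ℂ} (hx : x ∈ GG A μ) : proj A μ x = x := by
  classical
  rw [proj_apply]
  unfold eDec
  rw [(internal A).ofBijective_coeLinearMap_of_mem hx]

lemma proj_of_mem_ne {μ ν : ℂ} {x : Fin n → ℂ} (hx : x ∈ GG A ν) (hne : ν ≠ μ) :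
    proj A μ x = 0 := by
  classical
  rw [proj_apply]
  unfold eDec
  rw [(internal A).ofBijective_coeLinearMap_of_mem_ne hne hx]
  rfl

noncomputable def SpecS : Finset ℂ :=
  (Module.End.finite_hasEigenvalue (fEnd A)).toFinset

lemma mem_SpecS {μ : ℂ} : μ ∈ SpecS A ↔ (fEnd A).HasEigenvalue μ :=
  Set.Finite.mem_toFinset _

lemma SpecS_of_ne_bot {μ : ℂ} (h : GG A μ ≠ ⊥) : μ ∈ SpecS A := by
  rw [mem_SpecS]
  have h2 : (fEnd A).genEigenspace μ (Module.finrank ℂ (Fin n → ℂ)) ≠ ⊥ := by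
    rw [← Module.End.maxGenEigenspace_eq_genEigenspace_finrank]
    exact h
  exact Module.End.hasEigenvalue_of_hasGenEigenvalue h2

lemma proj_ne_mem {μ : ℂ} {x : Fin n → ℂ} (h : proj A μ x ≠ 0) : μ ∈ SpecS A := by
  apply SpecS_of_ne_bot
  intro hb
  apply h
  have := proj_mem A μ x
  rw [hb, Submodule.mem_bot] at this
  exact this

lemma sum_proj (x : Fin n → ℂ) : ∑ μ ∈ SpecS A, proj A μ x = x := by
  classical
  have hx : DirectSum.coeLinearMap (GG A) ((eDec A).symm x) = x :=
    (eDec A).apply_symm_apply x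
  rw [DirectSum.coeLinearMap_eq_dfinsuppSum, DFinsupp.sum] at hx
  have hs : ∑ μ ∈ ((eDec A).symm x).support, proj A μ x = x := hx
  have hsub : ((eDec A).symm x).support ⊆ SpecS A := by
    intro μ hμ
    apply proj_ne_mem A (x := x)
    rw [proj_apply]
    have hne := DFinsupp.mem_support_iff.mp hμ
    simpa using hne
  have hzero : ∀ μ ∈ SpecS A, μ ∉ ((eDec A).symm x).support → proj A μ x = 0 := by
    intro μ _ hμ
    rw [proj_apply, DFinsupp.notMem_support_iff.mp hμ]
    rfl
  exact (Finset.sum_subset hsub hzero).symm.trans hs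

lemma mulVec_mem_GG {μ : ℂ} {x : Fin n → ℂ} (hx : x ∈ GG A μ) :
    toC A *ᵥ x ∈ GG A μ := by
  have := Module.End.mapsTo_maxGenEigenspace_of_comm (Commute.refl (fEnd A)) μ hx
  rwa [fEnd_apply] at this

lemma proj_comm (μ : ℂ) (x : Fin n → ℂ) :
    proj A μ (toC A *ᵥ x) = toC A *ᵥ proj A μ x := by
  conv_lhs => rw [← sum_proj A x]
  have hmv : toC A *ᵥ (∑ ν ∈ SpecS A, proj A ν x)
      = ∑ ν ∈ SpecS A, toC A *ᵥ proj A ν x := by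
    simp only [← Matrix.mulVecLin_apply, map_sum]
  rw [hmv, map_sum]
  have hcon : ∑ ν ∈ SpecS A, proj A μ (toC A *ᵥ proj A ν x)
      = proj A μ (toC A *ᵥ proj A μ x) := by
    apply Finset.sum_eq_single μ
    · intro ν _ hne
      exact proj_of_mem_ne A (mulVec_mem_GG A (proj_mem A ν x)) hne
    · intro hμ
      have h0 : proj A μ x = 0 := by
        by_contra hc
        exact hμ (proj_ne_mem A hc)
      rw [h0, mulVec_zero, map_zero]
  rw [hcon, proj_of_mem A (mulVec_mem_GG A (proj_mem A μ x))]

lemma pow_transfer (μ : ℂ) (k : ℕ) (x : Fin n → ℂ) :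
    ((fEnd A - μ • 1) ^ k) x = ((toC A - μ • 1) ^ k) *ᵥ x := by
  have h : fEnd A - μ • 1 = Matrix.toLinAlgEquiv' (toC A - μ • 1) := by
    rw [map_sub]
    congr 1
    rw [show (μ • (1 : Matrix (Fin n) (Fin n) ℂ)) = algebraMap ℂ _ μ from
      (Algebra.algebraMap_eq_smul_one μ).symm, AlgEquiv.commutes,
      Algebra.algebraMap_eq_smul_one]
  rw [h, ← map_pow]
  exact Matrix.toLinAlgEquiv'_apply _ _

lemma GG_pow_zero {μ : ℂ} {x : Fin n → ℂ} (hx : x ∈ GG A μ) :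
    ((toC A - μ • 1) ^ n) *ᵥ x = 0 := by
  have h1 : GG A μ = (fEnd A).genEigenspace μ (Module.finrank ℂ (Fin n → ℂ)) :=
    Module.End.maxGenEigenspace_eq_genEigenspace_finrank _ _
  have hfr : Module.finrank ℂ (Fin n → ℂ) = n := by
    simp [Module.finrank_pi]
  rw [h1, hfr, Module.End.mem_genEigenspace_nat, LinearMap.mem_ker] at hx
  rw [← pow_transfer]
  exact hx


noncomputable def cc (μ : ℂ) : ℝ := if μ.re = 0 then 1 else (μ.re ^ 2)⁻¹

lemma cc_nonneg (μ : ℂ) : 0 ≤ cc μ := by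
  unfold cc
  split <;> positivity

noncomputable def KK (μ : ℂ) (i : ℕ) : Matrix (Fin n) (Fin n) ℂ :=
  (toC A - μ • 1) ^ i * LinearMap.toMatrix' (proj A μ)

noncomputable def PP : Matrix (Fin n) (Fin n) ℂ :=
  ∑ μ ∈ SpecS A, ∑ i ∈ Finset.range n, ((cc μ ^ i : ℝ) : ℂ) • ((KK A μ i)ᴴ * KK A μ i)

lemma sum_mulVec' {ι : Type*} (s : Finset ι) (M : ι → Matrix (Fin n) (Fin n) ℂ)
    (v : Fin n → ℂ) : (∑ k ∈ s, M k) *ᵥ v = ∑ k ∈ s, M k *ᵥ v := by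
  funext i
  simp only [mulVec, dotProduct, Finset.sum_apply, Matrix.sum_apply, Finset.sum_mul]
  rw [Finset.sum_comm]

lemma dot_sum' {ι : Type*} (s : Finset ι) (u : Fin n → ℂ) (w : ι → Fin n → ℂ) :
    u ⬝ᵥ (∑ k ∈ s, w k) = ∑ k ∈ s, u ⬝ᵥ w k := by
  simp only [dotProduct, Finset.sum_apply, Finset.mul_sum]
  rw [Finset.sum_comm]

lemma toMatrix'_proj_mulVec (μ : ℂ) (x : Fin n → ℂ) :
    LinearMap.toMatrix' (proj A μ) *ᵥ x = proj A μ x := by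
  rw [← Matrix.toLin'_apply, Matrix.toLin'_toMatrix']

lemma KK_mulVec (μ : ℂ) (i : ℕ) (x : Fin n → ℂ) :
    KK A μ i *ᵥ x = ((toC A - μ • 1) ^ i) *ᵥ proj A μ x := by
  rw [KK, ← mulVec_mulVec, toMatrix'_proj_mulVec]

lemma PP_form (x v : Fin n → ℂ) : star x ⬝ᵥ (PP A *ᵥ v)
    = ∑ μ ∈ SpecS A, ∑ i ∈ Finset.range n,
        ((cc μ ^ i : ℝ) : ℂ) * (star (KK A μ i *ᵥ x) ⬝ᵥ (KK A μ i *ᵥ v)) := by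
  unfold PP
  rw [sum_mulVec', dot_sum']
  refine Finset.sum_congr rfl fun μ _ => ?_
  rw [sum_mulVec', dot_sum']
  refine Finset.sum_congr rfl fun i _ => ?_
  rw [smul_mulVec, dotProduct_smul, smul_eq_mul, ← mulVec_mulVec,
    dot_move, conjTranspose_conjTranspose]

lemma PP_herm : (PP A)ᴴ = PP A := by
  unfold PP
  rw [conjTranspose_sum]
  refine Finset.sum_congr rfl fun μ _ => ?_
  rw [conjTranspose_sum]
  refine Finset.sum_congr rfl fun i _ => ?_
  rw [conjTranspose_smul, conjTranspose_mul, conjTranspose_conjTranspose]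
  congr 1
  simp [Complex.star_def, Complex.conj_ofReal]

lemma PP_pd {x : Fin n → ℂ} (hx : x ≠ 0) : 0 < (star x ⬝ᵥ (PP A *ᵥ x)).re := by
  have hn : 0 < n := by
    rcases Nat.eq_zero_or_pos n with h | h
    · exfalso; apply hx; subst h; funext i; exact i.elim0
    · exact h
  have hre : (star x ⬝ᵥ (PP A *ᵥ x)).re
      = ∑ μ ∈ SpecS A, ∑ i ∈ Finset.range n,
          (cc μ ^ i) * (star (KK A μ i *ᵥ x) ⬝ᵥ (KK A μ i *ᵥ x)).re := by
    rw [PP_form, Complex.re_sum]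
    refine Finset.sum_congr rfl fun μ _ => ?_
    rw [Complex.re_sum]
    refine Finset.sum_congr rfl fun i _ => ?_
    rw [Complex.re_ofReal_mul]
  rw [hre]
  -- find a nonzero component
  have hex : ∃ μ ∈ SpecS A, proj A μ x ≠ 0 := by
    by_contra hall
    push_neg at hall
    apply hx
    rw [← sum_proj A x]
    exact Finset.sum_eq_zero hall
  obtain ⟨μ₀, hμ₀S, hμ₀⟩ := hex
  apply Finset.sum_pos'
  · intro μ _
    apply Finset.sum_nonneg
    intro i _
    have := selfdot_re_nonneg (KK A μ i *ᵥ x)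
    have hc : (0:ℝ) ≤ cc μ ^ i := pow_nonneg (cc_nonneg μ) i
    positivity
  · refine ⟨μ₀, hμ₀S, ?_⟩
    apply Finset.sum_pos'
    · intro i _
      have := selfdot_re_nonneg (KK A μ₀ i *ᵥ x)
      have hc : (0:ℝ) ≤ cc μ₀ ^ i := pow_nonneg (cc_nonneg μ₀) i
      positivity
    · refine ⟨0, Finset.mem_range.mpr hn, ?_⟩
      have hK : KK A μ₀ 0 *ᵥ x = proj A μ₀ x := by
        rw [KK_mulVec, pow_zero, one_mulVec]
      rw [hK, pow_zero, one_mul]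
      exact selfdot_re_pos hμ₀


lemma cauchy_ineq (u v : Fin n → ℂ) {t : ℝ} (ht : 0 < t) :
    (star u ⬝ᵥ v).re ≤ t / 2 * (star u ⬝ᵥ u).re + 1 / (2 * t) * (star v ⬝ᵥ v).re := by
  have h0 := selfdot_re_nonneg ((t : ℂ) • u - v)
  have hexp : star ((t : ℂ) • u - v) ⬝ᵥ ((t : ℂ) • u - v)
      = (t : ℂ) ^ 2 * (star u ⬝ᵥ u) - (t : ℂ) * (star u ⬝ᵥ v)
        - (t : ℂ) * (star v ⬝ᵥ u) + star v ⬝ᵥ v := by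
    simp only [star_sub, star_smul, Complex.star_def, Complex.conj_ofReal,
      sub_dotProduct, dotProduct_sub, smul_dotProduct, dotProduct_smul, smul_eq_mul]
    ring
  rw [hexp] at h0
  have e : ((t : ℂ) ^ 2 * (star u ⬝ᵥ u) - (t : ℂ) * (star u ⬝ᵥ v)
        - (t : ℂ) * (star v ⬝ᵥ u) + star v ⬝ᵥ v).re
      = t ^ 2 * (star u ⬝ᵥ u).re - t * (star u ⬝ᵥ v).re
        - t * (star v ⬝ᵥ u).re + (star v ⬝ᵥ v).re := by
    simp [Complex.add_re, Complex.sub_re, ← Complex.ofReal_pow, Complex.re_ofReal_mul]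
  rw [e, re_dot_comm v u] at h0
  have h2t : (0:ℝ) < 2 * t := by linarith
  have h3 : (star u ⬝ᵥ v).re
      ≤ (t ^ 2 * (star u ⬝ᵥ u).re + (star v ⬝ᵥ v).re) / (2 * t) := by
    rw [le_div_iff₀ h2t]
    nlinarith [h0]
  refine h3.trans_eq ?_
  field_simp

lemma PP_lyap (hst : IsStable A) (x : Fin n → ℂ) :
    (star x ⬝ᵥ (PP A *ᵥ (toC A *ᵥ x))).re ≤ 0 := by
  rw [PP_form, Complex.re_sum]
  apply Finset.sum_nonpos
  intro μ hμ
  have heig : (fEnd A).HasEigenvalue μ := (mem_SpecS A).mp hμ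
  obtain ⟨w0, hw0⟩ := heig.exists_hasEigenvector
  have hwitness : ∃ z : Fin n → ℂ, z ≠ 0 ∧ toC A *ᵥ z = μ • z := by
    refine ⟨w0, hw0.2, ?_⟩
    rw [← fEnd_apply]
    exact Module.End.mem_eigenspace_iff.mp hw0.1
  have hstab := hst μ hwitness
  set y := proj A μ x with hy
  set B := toC A - μ • 1 with hB
  have hterm : ∀ i, KK A μ i *ᵥ (toC A *ᵥ x) = B ^ (i+1) *ᵥ y + μ • (B ^ i *ᵥ y) := by
    intro i
    rw [KK_mulVec, proj_comm, ← hy]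
    have h2 : toC A *ᵥ y = B *ᵥ y + μ • y := by
      rw [hB, sub_mulVec, smul_mulVec, one_mulVec, sub_add_cancel]
    rw [h2, mulVec_add, mulVec_smul, mulVec_mulVec, ← pow_succ]
  have hKx : ∀ i, KK A μ i *ᵥ x = B ^ i *ᵥ y := fun i => by
    rw [KK_mulVec, ← hy, hB]
  set s : ℕ → ℝ := fun i => (star (B ^ i *ᵥ y) ⬝ᵥ (B ^ i *ᵥ y)).re with hs
  have hsnn : ∀ i, 0 ≤ s i := fun i => selfdot_re_nonneg _
  have hBny : B ^ n *ᵥ y = 0 := GG_pow_zero A (proj_mem A μ x)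
  have hsn : s n = 0 := by
    rw [hs]
    simp only [hBny, dotProduct_zero, Complex.zero_re]
  have hre_term : (∑ i ∈ Finset.range n,
        ((cc μ ^ i : ℝ) : ℂ) * (star (KK A μ i *ᵥ x) ⬝ᵥ (KK A μ i *ᵥ (toC A *ᵥ x)))).re
      = ∑ i ∈ Finset.range n,
          (cc μ ^ i) * ((star (B ^ i *ᵥ y) ⬝ᵥ (B ^ (i+1) *ᵥ y)).re + μ.re * s i) := by
    rw [Complex.re_sum]
    refine Finset.sum_congr rfl fun i _ => ?_
    rw [hKx, hterm, dotProduct_add, dotProduct_smul, smul_eq_mul, Complex.re_ofReal_mul]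
    congr 1
    rw [Complex.add_re, Complex.mul_re]
    have him := selfdot_im (B ^ i *ᵥ y)
    rw [him]
    simp [hs]
  rw [hre_term]
  by_cases h0 : μ.re = 0
  · have hBy : B *ᵥ y = 0 := (hstab.2 h0 y).mp hBny
    have hws : ∀ i : ℕ, B ^ (i+1) *ᵥ y = 0 := fun i => by
      rw [pow_succ, ← mulVec_mulVec, hBy, mulVec_zero]
    apply le_of_eq
    apply Finset.sum_eq_zero
    intro i _
    rw [hws, dotProduct_zero, h0]
    simp
  · have hneg : μ.re < 0 := lt_of_le_of_ne hstab.1 h0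
    set a := -μ.re with ha
    have hapos : 0 < a := by rw [ha]; linarith
    have hccμ : cc μ = (a ^ 2)⁻¹ := by
      simp only [cc, if_neg h0]
      rw [ha, neg_sq]
    set g : ℕ → ℝ := fun j => a / 2 * (cc μ ^ j) * s j with hg
    have hgnn : ∀ j, 0 ≤ g j := by
      intro j
      have := hsnn j
      have hc : (0:ℝ) ≤ cc μ ^ j := pow_nonneg (cc_nonneg μ) j
      rw [hg]
      positivity
    have hgn : g n = 0 := by rw [hg]; simp [hsn]
    have hbound : ∀ i ∈ Finset.range n,
        cc μ ^ i * ((star (B ^ i *ᵥ y) ⬝ᵥ (B ^ (i+1) *ᵥ y)).re + μ.re * s i)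
          ≤ g (i+1) - g i := by
      intro i _
      have hc := cauchy_ineq (B ^ i *ᵥ y) (B ^ (i+1) *ᵥ y) hapos
      have hcnn : (0:ℝ) ≤ cc μ ^ i := pow_nonneg (cc_nonneg μ) i
      have h1 : cc μ ^ i * (star (B ^ i *ᵥ y) ⬝ᵥ (B ^ (i+1) *ᵥ y)).re
          ≤ cc μ ^ i * (a / 2 * s i + 1 / (2 * a) * s (i+1)) := by
        apply mul_le_mul_of_nonneg_left _ hcnn
        exact hc
      have hkey : cc μ ^ i * (1 / (2 * a)) = a / 2 * cc μ ^ (i+1) := by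
        rw [pow_succ, hccμ]
        field_simp
      have hμa : μ.re = -a := by rw [ha]; ring
      rw [hg]
      simp only []
      nlinarith [h1, hkey, hsnn i, hsnn (i+1)]
    calc ∑ i ∈ Finset.range n,
          cc μ ^ i * ((star (B ^ i *ᵥ y) ⬝ᵥ (B ^ (i+1) *ᵥ y)).re + μ.re * s i)
        ≤ ∑ i ∈ Finset.range n, (g (i+1) - g i) := Finset.sum_le_sum hbound
      _ = g n - g 0 := Finset.sum_range_sub g n
      _ ≤ 0 := by rw [hgn]; linarith [hgnn 0]


lemma real_form (X : Matrix (Fin n) (Fin n) ℂ) (u : Fin n → ℝ) :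
    u ⬝ᵥ ((Matrix.of fun i j => (X i j).re) *ᵥ u)
      = (star (fun i => ((u i : ℝ) : ℂ)) ⬝ᵥ (X *ᵥ fun i => ((u i : ℝ) : ℂ))).re := by
  simp only [dotProduct, mulVec, Pi.star_apply, Complex.star_def, Complex.conj_ofReal,
    of_apply, Finset.mul_sum, Complex.re_sum]
  refine Finset.sum_congr rfl fun i _ => Finset.sum_congr rfl fun j _ => ?_
  simp [Complex.mul_re]

lemma realCT (M : Matrix (Fin n) (Fin n) ℝ) : Mᴴ = Mᵀ := by
  ext i j
  simp [conjTranspose_apply]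

lemma real_herm {M : Matrix (Fin n) (Fin n) ℝ} (h : Mᵀ = M) : M.IsHermitian := by
  show Mᴴ = M
  rw [realCT, h]

lemma psd_smul {M : Matrix (Fin n) (Fin n) ℝ} (h : M.PosSemidef) {c : ℝ} (hc : 0 ≤ c) :
    (c • M).PosSemidef := by
  refine PosSemidef.of_dotProduct_mulVec_nonneg ?_ ?_
  · show (c • M)ᴴ = c • M
    rw [conjTranspose_smul, h.1]
    congr 1
  · intro u
    rw [smul_mulVec, dotProduct_smul, smul_eq_mul]
    exact mul_nonneg hc (h.dotProduct_mulVec_nonneg u)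

lemma coeV_ne_zero {u : Fin n → ℝ} (hu : u ≠ 0) :
    (fun i => ((u i : ℝ) : ℂ)) ≠ 0 := by
  intro h
  apply hu
  funext i
  have := congrFun h i
  simpa [Complex.ofReal_eq_zero] using this

lemma forward (hst : IsStable A) :
    ∃ J R Q : Matrix (Fin n) (Fin n) ℝ,
      Jᵀ = -J ∧ R.PosSemidef ∧ Q.PosDef ∧ A = (J - R) * Q := by
  classical
  set Pr : Matrix (Fin n) (Fin n) ℝ := Matrix.of fun i j => (PP A i j).re with hPrdef
  have hPrSymm : Prᵀ = Pr := by
    ext i j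
    have h := congrFun (congrFun (PP_herm A) i) j
    rw [conjTranspose_apply] at h
    show (PP A j i).re = (PP A i j).re
    rw [← h]
    simp [Complex.star_def]
  have hPrPD : Pr.PosDef := by
    refine PosDef.of_dotProduct_mulVec_pos (real_herm hPrSymm) fun u hu => ?_
    rw [star_trivial]
    have h := real_form (PP A) u
    rw [hPrdef]
    rw [h]
    exact PP_pd A (coeV_ne_zero hu)
  -- the Lyapunov inequality at the real level
  set Sr : Matrix (Fin n) (Fin n) ℝ := -(Aᵀ * Pr + Pr * A) with hSrdef
  have hEntry : Aᵀ * Pr + Pr * A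
      = Matrix.of fun i j => ((((toC A)ᴴ * PP A) + PP A * toC A) i j).re := by
    ext i j
    simp only [hPrdef, Matrix.add_apply, mul_apply, of_apply, conjTranspose_apply,
      Complex.add_re, Complex.re_sum]
    congr 1
    · refine Finset.sum_congr rfl fun k _ => ?_
      have hstar : star ((toC A) k i) = ((A k i : ℝ) : ℂ) := by
        simp [toC, Complex.star_def, Complex.conj_ofReal]
      rw [hstar, Complex.re_ofReal_mul, transpose_apply]
    · refine Finset.sum_congr rfl fun k _ => ?_
      have hco : (toC A) k j = ((A k j : ℝ) : ℂ) := rfl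
      rw [hco, mul_comm (PP A i k), Complex.re_ofReal_mul]
      ring
  have hquad : ∀ u : Fin n → ℝ, u ⬝ᵥ ((Aᵀ * Pr + Pr * A) *ᵥ u) ≤ 0 := by
    intro u
    rw [hEntry, real_form]
    set uc : Fin n → ℂ := fun i => ((u i : ℝ) : ℂ) with huc
    have hsplit : star uc ⬝ᵥ ((((toC A)ᴴ * PP A) + PP A * toC A) *ᵥ uc)
        = star uc ⬝ᵥ ((toC A)ᴴ *ᵥ (PP A *ᵥ uc)) + star uc ⬝ᵥ (PP A *ᵥ (toC A *ᵥ uc)) := by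
      rw [add_mulVec, dotProduct_add, ← mulVec_mulVec, ← mulVec_mulVec]
    rw [hsplit, Complex.add_re]
    have h1 : (star uc ⬝ᵥ ((toC A)ᴴ *ᵥ (PP A *ᵥ uc))).re
        = (star uc ⬝ᵥ (PP A *ᵥ (toC A *ᵥ uc))).re := by
      rw [dot_move ((toC A)ᴴ), conjTranspose_conjTranspose, re_dot_comm,
        dot_move (PP A), PP_herm]
    rw [h1]
    have h2 := PP_lyap A hst uc
    linarith
  have hSr : Sr.PosSemidef := by
    refine PosSemidef.of_dotProduct_mulVec_nonneg ?_ ?_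
    · apply real_herm
      rw [hSrdef, transpose_neg, transpose_add, transpose_mul, transpose_mul,
        transpose_transpose, hPrSymm]
      rw [add_comm]
    · intro u
      rw [star_trivial, hSrdef, neg_mulVec, dotProduct_neg]
      have := hquad u
      linarith
  -- invertibility
  have hdet : IsUnit Pr.det := Matrix.isUnit_iff_isUnit_det Pr |>.mp hPrPD.isUnit
  have hinv1 : Pr * Pr⁻¹ = 1 := Matrix.mul_nonsing_inv _ hdet
  have hinv2 : Pr⁻¹ * Pr = 1 := Matrix.nonsing_inv_mul _ hdet
  have hPiSymm : (Pr⁻¹)ᵀ = Pr⁻¹ := by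
    rw [Matrix.transpose_nonsing_inv, hPrSymm]
  set Rm : Matrix (Fin n) (Fin n) ℝ := (2⁻¹ : ℝ) • (Pr⁻¹ * Sr * Pr⁻¹) with hRmdef
  have hRmPSD : Rm.PosSemidef := by
    apply psd_smul _ (by norm_num)
    have base := hSr.mul_mul_conjTranspose_same (Pr⁻¹)
    rwa [realCT, hPiSymm] at base
  have hRm_eq : Rm = (2⁻¹ : ℝ) • (-(Pr⁻¹ * Aᵀ) - A * Pr⁻¹) := by
    rw [hRmdef]
    congr 1
    rw [hSrdef]
    have : Pr⁻¹ * -(Aᵀ * Pr + Pr * A) * Pr⁻¹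
        = -(Pr⁻¹ * Aᵀ * (Pr * Pr⁻¹) + Pr⁻¹ * Pr * (A * Pr⁻¹)) := by
      noncomm_ring
    rw [this, hinv1, hinv2, Matrix.mul_one, Matrix.one_mul]
    noncomm_ring
  set Jm : Matrix (Fin n) (Fin n) ℝ := A * Pr⁻¹ + Rm with hJmdef
  have hJm : Jmᵀ = -Jm := by
    have hRmSymm : Rmᵀ = Rm := by
      rw [← realCT]
      exact hRmPSD.1
    rw [hJmdef, transpose_add, transpose_mul, hPiSymm, hRmSymm, hRm_eq]
    module
  have hfinal : A = (Jm - Rm) * Pr := by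
    have h : Jm - Rm = A * Pr⁻¹ := by rw [hJmdef, add_sub_cancel_right]
    rw [h, Matrix.mul_assoc, hinv2, Matrix.mul_one]
  exact ⟨Jm, Rm, Pr, hJm, hRmPSD, hPrPD, hfinal⟩

end Forward

end StableDH

theorem stable_iff_DH {n : ℕ} (A : Matrix (Fin n) (Fin n) ℝ) :
    IsStable A ↔
      ∃ J R Q : Matrix (Fin n) (Fin n) ℝ,
        Jᵀ = -J ∧ R.PosSemidef ∧ Q.PosDef ∧ A = (J - R) * Q := by
  constructor
  · exact StableDH.forward A
  · rintro ⟨J, R, Q, hJ, hR, hQ, hA⟩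
    exact StableDH.backward hJ hR hQ hA
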